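/- For all x in (0, 1), sinh(x) · arcsinh(x) ≥ x². -/
import Mathlib

open Real Finset

lemma exp_bound6 (y : ℝ) (h0 : 0 ≤ y) (h1 : y ≤ 1) :
    |Real.exp y - (1 + y + y^2/2 + y^3/6 + y^4/24 + y^5/120)| ≤ 7*y^6/4320 ∧
    |Real.exp (-y) - (1 - y + y^2/2 - y^3/6 + y^4/24 - y^5/120)| ≤ 7*y^6/4320 := by
  have hy : |y| ≤ 1 := by rw [abs_of_nonneg h0]; exact h1
  have hy' : |(-y)| ≤ 1 := by rwa [abs_neg]
  have h6 : (0:ℕ) < 6 := by norm_num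
  have A := Real.exp_bound hy h6
  have B := Real.exp_bound hy' h6
  have hsum : ∑ m ∈ range 6, y ^ m / m.factorial
      = 1 + y + y^2/2 + y^3/6 + y^4/24 + y^5/120 := by
    simp [Finset.sum_range_succ, Nat.factorial]
  have hsum' : ∑ m ∈ range 6, (-y) ^ m / m.factorial
      = 1 - y + y^2/2 - y^3/6 + y^4/24 - y^5/120 := by
    simp [Finset.sum_range_succ, Nat.factorial]; ring
  have habs : |y| ^ 6 = y ^ 6 := by rw [abs_of_nonneg h0]
  have habs' : |(-y)| ^ 6 = y ^ 6 := by rw [abs_neg, abs_of_nonneg h0]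
  rw [hsum, habs] at A
  rw [hsum', habs'] at B
  have hc : ((6:ℕ).succ / ((6:ℕ).factorial * (6:ℕ)) : ℝ) = 7/4320 := by
    norm_num [Nat.factorial]
  rw [hc] at A B
  constructor
  · calc |Real.exp y - (1 + y + y^2/2 + y^3/6 + y^4/24 + y^5/120)| ≤ y^6 * (7/4320) := A
      _ = 7*y^6/4320 := by ring
  · calc |Real.exp (-y) - (1 - y + y^2/2 - y^3/6 + y^4/24 - y^5/120)| ≤ y^6 * (7/4320) := B
      _ = 7*y^6/4320 := by ring

lemma sinh_lb (y : ℝ) (h0 : 0 ≤ y) (h1 : y ≤ 1) : y + y^3/6 ≤ Real.sinh y := by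
  obtain ⟨A, B⟩ := exp_bound6 y h0 h1
  rw [Real.sinh_eq]
  have hA : 1 + y + y^2/2 + y^3/6 + y^4/24 + y^5/120 - 7*y^6/4320 ≤ Real.exp y := by
    have := (abs_sub_le_iff.1 A).2; linarith
  have hB : Real.exp (-y) ≤ 1 - y + y^2/2 - y^3/6 + y^4/24 - y^5/120 + 7*y^6/4320 := by
    have := (abs_sub_le_iff.1 B).1; linarith
  have hy6 : y^6 ≤ y^5 := by
    calc y^6 = y^5 * y := by ring
      _ ≤ y^5 * 1 := mul_le_mul_of_nonneg_left h1 (by positivity)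
      _ = y^5 := by ring
  have hy5 : 0 ≤ y^5 := by positivity
  linarith

lemma sinh_ub (y : ℝ) (h0 : 0 ≤ y) (h1 : y ≤ 1) :
    Real.sinh y ≤ y + y^3/6 + y^5/100 := by
  obtain ⟨A, B⟩ := exp_bound6 y h0 h1
  rw [Real.sinh_eq]
  have hA : Real.exp y ≤ 1 + y + y^2/2 + y^3/6 + y^4/24 + y^5/120 + 7*y^6/4320 := by
    have := (abs_sub_le_iff.1 A).1; linarith
  have hB : 1 - y + y^2/2 - y^3/6 + y^4/24 - y^5/120 - 7*y^6/4320 ≤ Real.exp (-y) := by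
    have := (abs_sub_le_iff.1 B).2; linarith
  have hy6 : y^6 ≤ y^5 := by
    calc y^6 = y^5 * y := by ring
      _ ≤ y^5 * 1 := mul_le_mul_of_nonneg_left h1 (by positivity)
      _ = y^5 := by ring
  have hy5 : 0 ≤ y^5 := by positivity
  linarith

theorem stmt_19 (x : ℝ) (hx : x ∈ Set.Ioo (0:ℝ) 1) :
    Real.sinh x * Real.arsinh x ≥ x ^ 2 := by
  obtain ⟨hx0, hx1⟩ := hx
  set y := Real.arsinh x with hy
  have hsy : Real.sinh y = x := Real.sinh_arsinh x
  have hy0 : 0 < y := by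
    rw [hy, ← Real.arsinh_zero]
    exact Real.arsinh_lt_arsinh.2 hx0
  have hyx : y < x := by
    by_contra h
    push_neg at h
    have h1 : x < Real.sinh x := Real.self_lt_sinh_iff.2 hx0
    have h2 : Real.sinh x ≤ Real.sinh y := Real.sinh_le_sinh.2 h
    rw [hsy] at h2
    linarith
  have hy1 : y ≤ 1 := le_of_lt (hyx.trans hx1)
  have hlb := sinh_lb y hy0.le hy1
  have hub := sinh_ub y hy0.le hy1
  rw [hsy] at hlb hub
  have key : y * (6 + x^2) ≥ 6 * x := by
    have hsq : x^2 ≥ (y + y^3/6)^2 := by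
      have hnn : 0 ≤ y + y^3/6 := by positivity
      nlinarith
    have h1 : y * (6 + x^2) ≥ 6*y + y^3 + y^5/3 + y^7/36 := by nlinarith
    have h2 : 6 * x ≤ 6*y + y^3 + 6*y^5/100 := by linarith
    nlinarith [pow_nonneg hy0.le 5, pow_nonneg hy0.le 7]
  have hsx : Real.sinh x ≥ x + x^3/6 := sinh_lb x hx0.le hx1.le
  calc Real.sinh x * y ≥ (x + x^3/6) * y := by
        apply mul_le_mul_of_nonneg_right hsx hy0.le
    _ ≥ x^2 := by nlinarith
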